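/- Let r ∈ ℝ with r ≠ 0, r³ ≠ 1 and 2r³ + 1 ≠ 0. On ℝ⁵ with coordinates (x,y,z,p,q), define x₂ = (3x+p)/4, y₂ = (12^{2/3}/8)·y, z₂ = −(z + p²/6)/4, p₂ = −p/3, q₂ = −(12^{1/3}/6)·q, and define the linear functionals on tangent vectors v = (v_x,v_y,v_z,v_p,v_q): ω₂(v) = v_p + (2/r³ + 1)v_x − (3/r²)v_y, ω₃(v) = v_q − (3/r²)v_x + (6/r)v_y, ω₄(v) = v_y − (1/r)v_x, ϖ(v) = v_z − p·v_x − q·v_y. Then at every point m and for every v: Dz₂(v) − p₂(m)Dx₂(v) − q₂(m)Dy₂(v) = −(1/4)ϖ(v); Dp₂(v) − (2(r³+2)/(3(r³−1)))Dx₂(v) + 12^{1/3}(r/(r³−1))Dy₂(v) = −(r³/(2(r³−1)))ω₂(v); Dq₂(v) + 12^{1/3}(r/(r³−1))Dx₂(v) − 12^{2/3}((4r³−1)/(6r(r³−1)))Dy₂(v) = (12^{1/3}r/(4(r³−1)))ω₂(v) − (12^{1/3}/6)ω₃(v); Dy₂(v) − (12^{2/3}r²/(4r³+2))Dx₂(v)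 = −(12^{2/3}r²/(8(2r³+1)))ω₂(v) + (12^{2/3}(r³−1)/(4(2r³+1)))ω₄(v). -/

import Mathlib

noncomputable section

/-- Points (and tangent vectors) of `ℝ⁵`, coordinates `(x, y, z, p, q)`. -/
abbrev R5 : Type := ℝ × ℝ × ℝ × ℝ × ℝ

namespace Stmt13

/-- First component `x₂ = (3x + p)/4` of the coordinate diffeomorphism. -/
def x₂ (m : R5) : ℝ := (3 * m.1 + m.2.2.2.1) / 4
/-- Second component `y₂ = (12^{2/3}/8)·y`. -/
def y₂ (m : R5) : ℝ := ((12 : ℝ) ^ ((2 : ℝ) / 3) / 8) * m.2.1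
/-- Third component `z₂ = −(z + p²/6)/4`. -/
def z₂ (m : R5) : ℝ := -(m.2.2.1 + m.2.2.2.1 ^ 2 / 6) / 4
/-- Fourth component `p₂ = −p/3`. -/
def p₂ (m : R5) : ℝ := -m.2.2.2.1 / 3
/-- Fifth component `q₂ = −(12^{1/3}/6)·q`. -/
def q₂ (m : R5) : ℝ := -((12 : ℝ) ^ ((1 : ℝ) / 3) / 6) * m.2.2.2.2

/-- The structural 1-form `ω₂ = dp + (2/r³ + 1)dx − (3/r²)dy` evaluated on a tangent
vector. -/
def ω₂ (r : ℝ) (v : R5) : ℝ := v.2.2.2.1 + (2 / r ^ 3 + 1) * v.1 - 3 / r ^ 2 * v.2.1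
/-- The structural 1-form `ω₃ = dq − (3/r²)dx + (6/r)dy` evaluated on a tangent vector. -/
def ω₃ (r : ℝ) (v : R5) : ℝ := v.2.2.2.2 - 3 / r ^ 2 * v.1 + 6 / r * v.2.1
/-- The structural 1-form `ω₄ = dy − (1/r)dx` evaluated on a tangent vector. -/
def ω₄ (r : ℝ) (v : R5) : ℝ := v.2.1 - 1 / r * v.1
/-- The contact form `ϖ = dz − pdx − qdy` evaluated at `m` on a tangent vector. -/
def ϖ (m v : R5) : ℝ := v.2.2.1 - m.2.2.2.1 * v.1 - m.2.2.2.2 * v.2.1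

end Stmt13

open Stmt13

section AuxFDeriv
open ContinuousLinearMap
variable (m : R5)

private lemma hX : HasFDerivAt (fun m : R5 => m.1) (fst ℝ ℝ (ℝ × ℝ × ℝ × ℝ)) m :=
  hasFDerivAt_fst
private lemma hY : HasFDerivAt (fun m : R5 => m.2.1)
    ((fst ℝ ℝ (ℝ × ℝ × ℝ)).comp (snd ℝ ℝ (ℝ × ℝ × ℝ × ℝ))) m :=
  hasFDerivAt_fst.comp m hasFDerivAt_snd
private lemma hZ : HasFDerivAt (fun m : R5 => m.2.2.1)
    ((fst ℝ ℝ (ℝ × ℝ)).comp ((snd ℝ ℝ (ℝ × ℝ × ℝ)).comp (snd ℝ ℝ (ℝ × ℝ × ℝ × ℝ)))) m :=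
  hasFDerivAt_fst.comp m (hasFDerivAt_snd.comp m hasFDerivAt_snd)
private lemma hP : HasFDerivAt (fun m : R5 => m.2.2.2.1)
    ((fst ℝ ℝ ℝ).comp ((snd ℝ ℝ (ℝ × ℝ)).comp ((snd ℝ ℝ (ℝ × ℝ × ℝ)).comp
      (snd ℝ ℝ (ℝ × ℝ × ℝ × ℝ))))) m :=
  hasFDerivAt_fst.comp m (hasFDerivAt_snd.comp m (hasFDerivAt_snd.comp m hasFDerivAt_snd))
private lemma hQ : HasFDerivAt (fun m : R5 => m.2.2.2.2)
    ((snd ℝ ℝ ℝ).comp ((snd ℝ ℝ (ℝ × ℝ)).comp ((snd ℝ ℝ (ℝ × ℝ × ℝ)).comp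
      (snd ℝ ℝ (ℝ × ℝ × ℝ × ℝ))))) m :=
  hasFDerivAt_snd.comp m (hasFDerivAt_snd.comp m (hasFDerivAt_snd.comp m hasFDerivAt_snd))

private lemma eX (v : R5) : fderiv ℝ x₂ m v = (3 * v.1 + v.2.2.2.1) / 4 := by
  unfold x₂
  have h := (((hX m).const_mul (3:ℝ)).add (hP m)).mul_const (4:ℝ)⁻¹
  simp only [div_eq_mul_inv]
  refine (congrArg (fun L => L v) h.fderiv).trans ?_; simp; ring

private lemma eY (v : R5) : fderiv ℝ y₂ m v = ((12:ℝ) ^ ((2:ℝ)/3) / 8) * v.2.1 := by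
  unfold y₂
  have h := (hY m).const_mul ((12:ℝ) ^ ((2:ℝ)/3) / 8)
  rw [h.fderiv]; simp

private lemma eZ (v : R5) : fderiv ℝ z₂ m v
    = -(v.2.2.1 + 2 * m.2.2.2.1 * v.2.2.2.1 / 6) / 4 := by
  unfold z₂
  have h := ((((hZ m).add (((hP m).mul (hP m)).mul_const (6:ℝ)⁻¹)).neg).mul_const (4:ℝ)⁻¹)
  simp only [div_eq_mul_inv, pow_two]
  refine (congrArg (fun L => L v) h.fderiv).trans ?_; simp; ring

private lemma eP (v : R5) : fderiv ℝ p₂ m v = -v.2.2.2.1 / 3 := by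
  unfold p₂
  have h := ((hP m).neg).mul_const (3:ℝ)⁻¹
  simp only [div_eq_mul_inv]
  refine (congrArg (fun L => L v) h.fderiv).trans ?_; simp; ring

private lemma eQ (v : R5) : fderiv ℝ q₂ m v
    = -((12:ℝ) ^ ((1:ℝ)/3) / 6) * v.2.2.2.2 := by
  unfold q₂
  have h := (hQ m).const_mul (-((12:ℝ) ^ ((1:ℝ)/3) / 6))
  rw [h.fderiv]; simp

end AuxFDeriv

private lemma cube_root_pow : ((12:ℝ) ^ ((1:ℝ)/3)) ^ 3 = 12 := by
  rw [← Real.rpow_natCast ((12:ℝ) ^ ((1:ℝ)/3)) 3, ← Real.rpow_mul (by norm_num)]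
  norm_num

private lemma two_thirds_pow : (12:ℝ) ^ ((2:ℝ)/3) = ((12:ℝ) ^ ((1:ℝ)/3)) ^ 2 := by
  rw [← Real.rpow_natCast ((12:ℝ) ^ ((1:ℝ)/3)) 2, ← Real.rpow_mul (by norm_num)]
  norm_num

/-- The pullback of the (inverted and translated) standard structural 1-forms under the
coordinate diffeomorphism `(x₂,y₂,z₂,p₂,q₂)` lies in the span of `ϖ, ω₂, ω₃, ω₄`, with the
explicit coefficients recovering the parametrized solution
`(12^{2/3}r²/(4r³+2), −2·12^{1/3}r/(2r³+1))` of Noth's equation. -/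
theorem recovering_noth_solution_two (r : ℝ) (hr0 : r ≠ 0) (hr1 : r ^ 3 ≠ 1)
    (hr2 : 2 * r ^ 3 + 1 ≠ 0) :
    ∀ m v : R5,
      (fderiv ℝ z₂ m v - p₂ m * fderiv ℝ x₂ m v - q₂ m * fderiv ℝ y₂ m v
        = -(1 / 4) * ϖ m v)
      ∧ (fderiv ℝ p₂ m v - 2 * (r ^ 3 + 2) / (3 * (r ^ 3 - 1)) * fderiv ℝ x₂ m v
            + (12 : ℝ) ^ ((1 : ℝ) / 3) * (r / (r ^ 3 - 1)) * fderiv ℝ y₂ m v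
          = -(r ^ 3 / (2 * (r ^ 3 - 1))) * ω₂ r v)
      ∧ (fderiv ℝ q₂ m v + (12 : ℝ) ^ ((1 : ℝ) / 3) * (r / (r ^ 3 - 1)) * fderiv ℝ x₂ m v
            - (12 : ℝ) ^ ((2 : ℝ) / 3) * ((4 * r ^ 3 - 1) / (6 * r * (r ^ 3 - 1)))
              * fderiv ℝ y₂ m v
          = ((12 : ℝ) ^ ((1 : ℝ) / 3) * r / (4 * (r ^ 3 - 1))) * ω₂ r v
            - ((12 : ℝ) ^ ((1 : ℝ) / 3) / 6) * ω₃ r v)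
      ∧ (fderiv ℝ y₂ m v
            - ((12 : ℝ) ^ ((2 : ℝ) / 3) * r ^ 2 / (4 * r ^ 3 + 2)) * fderiv ℝ x₂ m v
          = -((12 : ℝ) ^ ((2 : ℝ) / 3) * r ^ 2 / (8 * (2 * r ^ 3 + 1))) * ω₂ r v
            + ((12 : ℝ) ^ ((2 : ℝ) / 3) * (r ^ 3 - 1) / (4 * (2 * r ^ 3 + 1))) * ω₄ r v) := by
  intro m v
  have h1 : r ^ 3 - 1 ≠ 0 := sub_ne_zero.mpr hr1
  have h4 : (4:ℝ) * r ^ 3 + 2 ≠ 0 := by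
    intro h; apply hr2; linarith
  rw [eX, eY, eZ, eP, eQ]
  unfold Stmt13.ω₂ Stmt13.ω₃ Stmt13.ω₄ Stmt13.ϖ Stmt13.p₂ Stmt13.q₂
  rw [two_thirds_pow]
  have ha := cube_root_pow
  set a : ℝ := (12:ℝ) ^ ((1:ℝ)/3) with hadef
  refine ⟨by linear_combination (m.2.2.2.2 * v.2.1 * (1/48)) * ha, ?_, ?_, ?_⟩
  · field_simp
    linear_combination (v.2.1 * 24 * r) * ha
  · field_simp
    linear_combination (a * v.2.1 * (4 * r - 16 * r ^ 4)) * ha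
  · field_simp
    have e : (1 + r ^ 3 * 2) * (1 + r ^ 3 * 2)⁻¹ = 1 :=
      mul_inv_cancel₀ (by intro h; apply hr2; linarith)
    have e2 : (2 + r ^ 3 * 4)⁻¹ = (1 + r ^ 3 * 2)⁻¹ / 2 := by
      rw [show (2:ℝ) + r ^ 3 * 4 = 2 * (1 + r ^ 3 * 2) by ring, mul_inv]; ring
    linear_combination (-24 * a ^ 2 * r ^ 3 * v.1 - 8 * a ^ 2 * r ^ 3 * v.2.2.2.1) * e2
      - 4 * a ^ 2 * r * v.2.1 * e
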